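/- Let σ ≠ 0 and σ′ be scalars, let δ₁, δ₂, δ₃ be scalars with (j₁−σ′)(j₂−σ′)(j₃−σ′) = σ², where j_α = σδ_α + σ′ for α = 1,2,3 (so that δ₁δ₂δ₃ = 1/σ), and assume j₁, j₂, j₃ are nonzero. Suppose (K,p) satisfies p_α = δ_α K_α for α = 1,2,3, together with C₁ = Σ δ_α K_α² = 0 and C₂ = Σ δ_α²K_α² = 1. Then C₃(K,p) = Σ [K_α² + (j_β+j_γ)δ_α²K_α²] = 2σ′ and C₄(K,p) = Σ [j_α K_α² + j_β j_γ δ_α² K_α²] = (σ′)², where for each α, {α,β,γ} = {1,2,3}. In particular, C₃² − 4C₄ = 0, so the quadratic x² − C₃x + C₄ = 0 has a double root (j₄ = j₅). -/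
import Mathlib


/-- On the invariant subspaces `p_α = δ_α K_α` with `j_α = σδ_α + σ′` and
`(j₁−σ′)(j₂−σ′)(j₃−σ′) = σ²`, the conditions `C₁ = 0` and `C₂ = 1` force
`C₃ = 2σ′` and `C₄ = (σ′)²`; in particular `C₃² − 4C₄ = 0`, so `x² − C₃x + C₄ = 0`
has a double root (`j₄ = j₅`). -/
theorem special_solution_double_root (σ σ' δ₁ δ₂ δ₃ j₁ j₂ j₃ K₁ K₂ K₃ p₁ p₂ p₃ : ℝ)
    (hσ : σ ≠ 0)
    (hj₁ : j₁ = σ * δ₁ + σ') (hj₂ : j₂ = σ * δ₂ + σ') (hj₃ : j₃ = σ * δ₃ + σ')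
    (hσsq : (j₁ - σ') * (j₂ - σ') * (j₃ - σ') = σ ^ 2)
    (hj₁0 : j₁ ≠ 0) (hj₂0 : j₂ ≠ 0) (hj₃0 : j₃ ≠ 0)
    (hp₁ : p₁ = δ₁ * K₁) (hp₂ : p₂ = δ₂ * K₂) (hp₃ : p₃ = δ₃ * K₃)
    (hC₁ : δ₁ * K₁ ^ 2 + δ₂ * K₂ ^ 2 + δ₃ * K₃ ^ 2 = 0)
    (hC₂ : δ₁ ^ 2 * K₁ ^ 2 + δ₂ ^ 2 * K₂ ^ 2 + δ₃ ^ 2 * K₃ ^ 2 = 1) :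
    ((K₁ ^ 2 + (j₂ + j₃) * δ₁ ^ 2 * K₁ ^ 2)
        + (K₂ ^ 2 + (j₃ + j₁) * δ₂ ^ 2 * K₂ ^ 2)
        + (K₃ ^ 2 + (j₁ + j₂) * δ₃ ^ 2 * K₃ ^ 2) = 2 * σ')
    ∧ ((j₁ * K₁ ^ 2 + j₂ * j₃ * δ₁ ^ 2 * K₁ ^ 2)
        + (j₂ * K₂ ^ 2 + j₃ * j₁ * δ₂ ^ 2 * K₂ ^ 2)
        + (j₃ * K₃ ^ 2 + j₁ * j₂ * δ₃ ^ 2 * K₃ ^ 2) = σ' ^ 2)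
    ∧ (2 * σ') ^ 2 - 4 * σ' ^ 2 = 0 := by
  subst hj₁ hj₂ hj₃
  have hd : σ * (δ₁ * δ₂ * δ₃) = 1 := by
    have h2 : σ ^ 2 * (σ * (δ₁ * δ₂ * δ₃)) = σ ^ 2 * 1 := by ring_nf; ring_nf at hσsq; linarith
    exact mul_left_cancel₀ (pow_ne_zero 2 hσ) h2
  refine ⟨?_, ?_, by ring⟩
  · linear_combination σ * (δ₁ * δ₂ + δ₂ * δ₃ + δ₃ * δ₁) * hC₁ + 2 * σ' * hC₂ -
      (K₁ ^ 2 + K₂ ^ 2 + K₃ ^ 2) * hd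
  · linear_combination (2 * σ + σ' * σ * (δ₁ * δ₂ + δ₂ * δ₃ + δ₃ * δ₁)) * hC₁ +
      σ' ^ 2 * hC₂ - (σ' * (K₁ ^ 2 + K₂ ^ 2 + K₃ ^ 2)
        - σ * (δ₁ * K₁ ^ 2 + δ₂ * K₂ ^ 2 + δ₃ * K₃ ^ 2)) * hd
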